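/- Let u : A ⥤ B be a functor between small categories and F : A ⥤ Type. Suppose the composite π_F ⋙ u : ∫F ⥤ B is factored as j ⋙ p, where j : ∫F ⥤ X is an initial functor and p : X ⥤ B is a discrete opfibration. Then the left Kan extension Lan_u F is the straightening of p: there is an equivalence of categories e : X ≌ ∫(Lan_u F) with e ⋙ π_{Lan_u F} = p (an equivalence over B between X and the category of elements of Lan_u F). -/

import Mathlib

open CategoryTheory

universe u w v' u'

/-- A functor `π : X ⥤ Y` is a discrete opfibration if for every object `x` of `X` and
every morphism `g : π x ⟶ y` of `Y` there is a unique morphism of `X` with domain `x`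
lying over `g` (in particular, its codomain lies over `y`). -/
def IsDiscreteOpfibration {X : Type*} {Y : Type*} [Category X] [Category Y]
    (π : X ⥤ Y) : Prop :=
  ∀ ⦃x : X⦄ ⦃y : Y⦄ (g : π.obj x ⟶ y),
    ∃! p : Σ x' : X, (x ⟶ x'),
      (⟨π.obj p.1, π.map p.2⟩ : Σ y' : Y, (π.obj x ⟶ y')) = ⟨y, g⟩

namespace LanStraighten

section SigmaHelpers

variable {Y : Type*} [Category Y]

lemma sigma_hom_mk {c y y' : Y} (f : c ⟶ y) (e : y = y') (f' : c ⟶ y')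
    (h : f ≫ eqToHom e = f') : (⟨y, f⟩ : Σ z : Y, (c ⟶ z)) = ⟨y', f'⟩ := by
  subst e; simpa using h

lemma sigma_hom_fac {c : Y} {s t : Σ z : Y, (c ⟶ z)} (h : s = t) :
    s.2 ≫ eqToHom (congrArg Sigma.fst h) = t.2 := by
  subst h; simp

end SigmaHelpers

section Lift

variable {X B : Type u} [SmallCategory X] [SmallCategory B] {p : X ⥤ B}
  (hp : IsDiscreteOpfibration p)

/-- The chosen lift of a morphism out of `p.obj x`. -/
noncomputable def lft {x : X} {b : B} (g : p.obj x ⟶ b) : Σ x' : X, (x ⟶ x') :=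
  (hp g).choose

lemma lft_spec {x : X} {b : B} (g : p.obj x ⟶ b) :
    (⟨p.obj (lft hp g).1, p.map (lft hp g).2⟩ : Σ y' : B, (p.obj x ⟶ y')) = ⟨b, g⟩ :=
  (hp g).choose_spec.1

lemma lft_obj {x : X} {b : B} (g : p.obj x ⟶ b) : p.obj (lft hp g).1 = b :=
  congrArg Sigma.fst (lft_spec hp g)

lemma lft_fac {x : X} {b : B} (g : p.obj x ⟶ b) :
    p.map (lft hp g).2 ≫ eqToHom (lft_obj hp g) = g :=
  sigma_hom_fac (lft_spec hp g)

lemma lft_map {x : X} {b : B} (g : p.obj x ⟶ b) :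
    p.map (lft hp g).2 = g ≫ eqToHom (lft_obj hp g).symm :=
  (comp_eqToHom_iff (lft_obj hp g) _ _).mp (lft_fac hp g)

lemma lft_unique {x : X} {b : B} (g : p.obj x ⟶ b) {x' : X} (h : x ⟶ x')
    (e : p.obj x' = b) (hm : p.map h ≫ eqToHom e = g) :
    (⟨x', h⟩ : Σ x'' : X, (x ⟶ x'')) = lft hp g :=
  (hp g).choose_spec.2 _ (sigma_hom_mk _ e _ hm)

end Lift

section Straightening

variable {X B : Type u} [SmallCategory X] [SmallCategory B] {p : X ⥤ B}
  (hp : IsDiscreteOpfibration p)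

/-- The straightening of a discrete opfibration. -/
noncomputable def G : B ⥤ Type u where
  obj b := { x : X // p.obj x = b }
  map {b b'} g := ↾fun x => ⟨(lft hp (eqToHom x.2 ≫ g)).1, lft_obj hp _⟩
  map_id b := by
    ext x
    exact (congrArg Sigma.fst (lft_unique hp (eqToHom x.2 ≫ 𝟙 b) (𝟙 x.1) x.2
      (by simp))).symm
  map_comp {b b' b''} g g' := by
    ext x
    exact (congrArg Sigma.fst (lft_unique hp (eqToHom x.2 ≫ (g ≫ g'))
      ((lft hp (eqToHom x.2 ≫ g)).2 ≫
        (lft hp (eqToHom (lft_obj hp (eqToHom x.2 ≫ g)) ≫ g')).2)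
      (lft_obj hp _)
      (by rw [p.map_comp, Category.assoc, lft_fac, ← Category.assoc, lft_fac]; simp))).symm

/-- The comparison functor from `X` to the category of elements of the straightening. -/
noncomputable def Phi : X ⥤ (G hp).Elements where
  obj x := ⟨p.obj x, ⟨x, rfl⟩⟩
  map {x x'} f := ⟨p.map f, Subtype.ext
    (congrArg Sigma.fst (lft_unique hp (eqToHom rfl ≫ p.map f) f rfl (by simp))).symm⟩
  map_id x := by apply CategoryOfElements.ext; simp; rfl
  map_comp f g := by apply CategoryOfElements.ext; simp; rfl

lemma Phi_faithful : (Phi hp).Faithful := by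
  constructor
  intro x x' f f' h
  have hval : p.map f = p.map f' := congrArg Subtype.val h
  have h1 : (⟨x', f⟩ : Σ x'' : X, (x ⟶ x'')) = lft hp (p.map f) :=
    lft_unique hp (p.map f) f rfl (by simp)
  have h2 : (⟨x', f'⟩ : Σ x'' : X, (x ⟶ x'')) = lft hp (p.map f) :=
    lft_unique hp (p.map f) f' rfl (by simp [hval])
  have h3 := h1.trans h2.symm
  rw [Sigma.mk.inj_iff] at h3
  exact eq_of_heq h3.2

lemma Phi_full : (Phi hp).Full := by
  constructor
  intro x x' g
  have e : (lft hp (eqToHom rfl ≫ g.val)).1 = x' := congrArg Subtype.val g.2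
  refine ⟨(lft hp (eqToHom rfl ≫ g.val)).2 ≫ eqToHom e, ?_⟩
  apply CategoryOfElements.ext
  have : p.map ((lft hp (eqToHom rfl ≫ g.val)).2 ≫ eqToHom e) =
      p.map (lft hp (eqToHom rfl ≫ g.val)).2 ≫ eqToHom (congrArg p.obj e) := by
    rw [p.map_comp, eqToHom_map]
  simp only [Phi, this, lft_map]
  simp [eqToHom_map, lft_map]
  erw [eqToHom_map, eqToHom_trans, eqToHom_refl, Category.comp_id]

lemma Phi_essSurj : (Phi hp).EssSurj := by
  constructor
  intro y
  obtain ⟨b, x, hx⟩ := y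
  subst hx
  exact ⟨x, ⟨Iso.refl _⟩⟩

end Straightening

section Kan

variable {A B : Type u} [SmallCategory A] [SmallCategory B] (u : A ⥤ B) (F : A ⥤ Type u)
  {X : Type u} [SmallCategory X] (j : F.Elements ⥤ X) {p : X ⥤ B}
  (hp : IsDiscreteOpfibration p)
  (hfac : CategoryOfElements.π F ⋙ u = j ⋙ p)

include hfac

lemma he (e : F.Elements) : p.obj (j.obj e) = u.obj e.1 :=
  (Functor.congr_obj hfac e).symm

lemma pj_map {e e' : F.Elements} (m : e ⟶ e') :
    p.map (j.map m) =
      eqToHom (he u F j hfac e) ≫ u.map m.val ≫ eqToHom (he u F j hfac e').symm := by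
  have h := Functor.congr_hom hfac m
  simp only [Functor.comp_map, CategoryOfElements.π] at h
  exact Functor.congr_hom hfac.symm m

/-- The candidate unit `F ⟶ u ⋙ G`. -/
noncomputable def eta : F ⟶ u ⋙ G hp where
  app a := ↾fun y => ⟨j.obj ⟨a, y⟩, he u F j hfac ⟨a, y⟩⟩
  naturality a a' f := by
    ext y
    dsimp
    apply Subtype.ext
    exact congrArg Sigma.fst (lft_unique hp
      (eqToHom (he u F j hfac ⟨a, y⟩) ≫ u.map f)
      (j.map (⟨f, rfl⟩ : F.elementsMk a y ⟶ F.elementsMk a' (F.map f y)))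
      (he u F j hfac ⟨a', F.map f y⟩)
      (by erw [pj_map u F j hfac]; simp))

variable {H : B ⥤ Type u}

/-- `fw` sends `α : G ⟶ H` to `F ⟶ u ⋙ H`. -/
noncomputable def fw (α : G hp ⟶ H) : F ⟶ u ⋙ H :=
  eta u F j hp hfac ≫ Functor.whiskerLeft u α

/-- The value of the inverse construction at a costructured arrow. -/
noncomputable def bwfun (β : F ⟶ u ⋙ H) {b : B} (x : (G hp).obj b)
    (c : CostructuredArrow j x.1) : H.obj b :=
  H.map (eqToHom (he u F j hfac c.left).symm ≫ p.map c.hom ≫ eqToHom x.2)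
    (β.app c.left.1 c.left.2)

lemma bwfun_const (β : F ⟶ u ⋙ H) {b : B} (x : (G hp).obj b)
    {c c' : CostructuredArrow j x.1} (φ : c ⟶ c') :
    bwfun u F j hp hfac β x c = bwfun u F j hp hfac β x c' := by
  have hm : β.app c'.left.1 c'.left.2 =
      H.map (u.map φ.left.val) (β.app c.left.1 c.left.2) := by
    have h1 := NatTrans.naturality_apply β φ.left.val c.left.2
    have h2 : F.map φ.left.val c.left.2 = c'.left.2 := φ.left.2
    rw [h2] at h1
    exact h1
  dsimp [bwfun]
  rw [hm, ← FunctorToTypes.map_comp_apply]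
  refine types_congr_hom (congrArg H.map ?_) _
  conv_lhs => rw [← CostructuredArrow.w φ, p.map_comp, pj_map u F j hfac]
  simp

variable (hj : j.Initial)

/-- The inverse construction evaluated using a chosen costructured arrow. -/
noncomputable def bwApp (β : F ⟶ u ⋙ H) {b : B} (x : (G hp).obj b) : H.obj b :=
  haveI := hj
  bwfun u F j hp hfac β x (Classical.arbitrary _)

lemma bwApp_eq (β : F ⟶ u ⋙ H) {b : B} (x : (G hp).obj b)
    (c : CostructuredArrow j x.1) :
    bwApp u F j hp hfac hj β x = bwfun u F j hp hfac β x c := by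
  haveI := hj
  exact constant_of_preserves_morphisms _
    (fun c₁ c₂ φ => bwfun_const u F j hp hfac β x φ) _ c

/-- `bw` sends `β : F ⟶ u ⋙ H` to `G ⟶ H`. -/
noncomputable def bw (β : F ⟶ u ⋙ H) : G hp ⟶ H where
  app b := ↾fun x => bwApp u F j hp hfac hj β x
  naturality b b' g := by
    haveI := hj
    ext x
    show bwApp u F j hp hfac hj β ((G hp).map g x) = H.map g (bwApp u F j hp hfac hj β x)
    set c : CostructuredArrow j x.1 := Classical.arbitrary _ with hc
    rw [bwApp_eq u F j hp hfac hj β ((G hp).map g x)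
      (CostructuredArrow.mk (c.hom ≫ (lft hp (eqToHom x.2 ≫ g)).2)),
      bwApp_eq u F j hp hfac hj β x c]
    dsimp [bwfun]
    rw [← FunctorToTypes.map_comp_apply]
    refine types_congr_hom (congrArg H.map ?_) _
    erw [p.map_comp, lft_map hp]
    simp
    erw [Category.assoc, Category.assoc, Category.assoc, eqToHom_trans, eqToHom_refl, Category.comp_id]

lemma fw_bw (β : F ⟶ u ⋙ H) : fw u F j hp hfac (bw u F j hp hfac hj β) = β := by
  apply NatTrans.ext
  funext a; ext y
  show bwApp u F j hp hfac hj β (((eta u F j hp hfac).app a) y) = β.app a y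
  rw [bwApp_eq u F j hp hfac hj β _
    (CostructuredArrow.mk (𝟙 (j.obj (⟨a, y⟩ : F.Elements))))]
  dsimp [bwfun, eta]
  erw [CostructuredArrow.mk_hom_eq_self, p.map_id, Category.id_comp, eqToHom_trans, eqToHom_refl,
    H.map_id, types_id_apply]

lemma bw_fw (α : G hp ⟶ H) : bw u F j hp hfac hj (fw u F j hp hfac α) = α := by
  haveI := hj
  apply NatTrans.ext
  funext b; ext x
  show bwApp u F j hp hfac hj (fw u F j hp hfac α) x = α.app b x
  set c : CostructuredArrow j x.1 := Classical.arbitrary _ with hc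
  rw [bwApp_eq u F j hp hfac hj _ x c]
  dsimp [bwfun, fw, eta]
  have hnat := NatTrans.naturality_apply α
    (eqToHom (he u F j hfac c.left).symm ≫ p.map c.hom ≫ eqToHom x.2)
    ((eta u F j hp hfac).app c.left.1 c.left.2)
  dsimp [eta] at hnat
  rw [← hnat]
  refine congrArg (α.app b) ?_
  apply Subtype.ext
  exact (congrArg Sigma.fst (lft_unique hp _ c.hom x.2 (by simp; erw [eqToHom_refl, Category.id_comp]))).symm

end Kan

/-- A natural equivalence of hom-functors yields an isomorphism. -/
def iso_of_nat_equiv {C : Type*} [Category C] {Gc Lc : C}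
    (Θ : ∀ H : C, (Gc ⟶ H) ≃ (Lc ⟶ H))
    (nat : ∀ {H H' : C} (f : Gc ⟶ H) (t : H ⟶ H'), Θ H' (f ≫ t) = Θ H f ≫ t) :
    Lc ≅ Gc where
  hom := Θ Gc (𝟙 Gc)
  inv := (Θ Lc).symm (𝟙 Lc)
  hom_inv_id := by
    apply (Θ Lc).symm.injective
    have h1 : (Θ Lc).symm (Θ Gc (𝟙 Gc) ≫ (Θ Lc).symm (𝟙 Lc)) =
        (Θ Gc).symm (Θ Gc (𝟙 Gc)) ≫ (Θ Lc).symm (𝟙 Lc) := by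
      apply (Θ Lc).injective
      rw [nat, Equiv.apply_symm_apply, Equiv.apply_symm_apply]
    rw [h1, Equiv.symm_apply_apply, Category.id_comp]
  inv_hom_id := by
    apply (Θ Gc).injective
    rw [nat, Equiv.apply_symm_apply, Category.id_comp]

/-- Naturally isomorphic functors to `Type` have equivalent categories of elements. -/
noncomputable def elemEquiv {C : Type u'} [Category.{v'} C] {F₁ F₂ : C ⥤ Type w} (τ : F₁ ≅ F₂) :
    F₁.Elements ≌ F₂.Elements :=
  CategoryTheory.Equivalence.mk (CategoryOfElements.map τ.hom) (CategoryOfElements.map τ.inv)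
    (NatIso.ofComponents (fun t => CategoryOfElements.isoMk _ _ (Iso.refl _)
      (by simp; erw [Functor.map_id_apply, Iso.hom_inv_id_app_apply])) (by intro t t' f; apply CategoryOfElements.ext; simp; exact (Category.comp_id _).trans (Category.id_comp _).symm))
    (NatIso.ofComponents (fun t => CategoryOfElements.isoMk _ _ (Iso.refl _)
      (by simp; erw [Functor.map_id_apply, Iso.inv_hom_id_app_apply])) (by intro t t' f; apply CategoryOfElements.ext; simp; exact (Category.comp_id _).trans (Category.id_comp _).symm))

end LanStraighten

open LanStraighten in
/-- Let `u : A ⥤ B` and `F : A ⥤ Type u`, and suppose `π_F ⋙ u : ∫F ⥤ B` factors as an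
initial functor `j : ∫F ⥤ X` followed by a discrete opfibration `p : X ⥤ B`. Then
`Lan_u F` is the straightening of `p`: there is an equivalence of categories `e` between
`X` and the category of elements of `Lan_u F` which commutes with the projections to
`B`, i.e. `e.functor ⋙ π_{Lan_u F} = p`. -/
theorem lan_is_straightening_of_comprehensive_factorization
    {A B : Type u} [SmallCategory A] [SmallCategory B] (u : A ⥤ B) (F : A ⥤ Type u)
    {X : Type u} [SmallCategory X] (j : F.Elements ⥤ X) (p : X ⥤ B)
    (hj : j.Initial) (hp : IsDiscreteOpfibration p)
    (hfac : CategoryOfElements.π F ⋙ u = j ⋙ p) :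
    ∃ e : X ≌ (u.lan.obj F).Elements,
      e.functor ⋙ CategoryOfElements.π (u.lan.obj F) = p := by
  haveI := hj
  let adj := u.lanAdjunction (Type u)
  let Θ : ∀ H : B ⥤ Type u, (G hp ⟶ H) ≃ (u.lan.obj F ⟶ H) := fun H =>
    { toFun := fun α => (adj.homEquiv F H).symm (fw u F j hp hfac α)
      invFun := fun t => bw u F j hp hfac hj (adj.homEquiv F H t)
      left_inv := fun α => by
        dsimp only
        rw [Equiv.apply_symm_apply, bw_fw]
      right_inv := fun t => by
        dsimp only
        rw [fw_bw, Equiv.symm_apply_apply] }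
  have nat : ∀ {H H' : B ⥤ Type u} (f : G hp ⟶ H) (t : H ⟶ H'),
      Θ H' (f ≫ t) = Θ H f ≫ t := by
    intro H H' f t
    show (adj.homEquiv F H').symm (fw u F j hp hfac (f ≫ t)) =
      (adj.homEquiv F H).symm (fw u F j hp hfac f) ≫ t
    have : fw u F j hp hfac (f ≫ t) = fw u F j hp hfac f ≫ Functor.whiskerLeft u t := by
      simp [fw]
    rw [this]
    exact adj.homEquiv_naturality_right_symm _ _
  let σ : u.lan.obj F ≅ G hp := iso_of_nat_equiv Θ nat
  haveI : (Phi hp).Faithful := Phi_faithful hp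
  haveI : (Phi hp).Full := Phi_full hp
  haveI : (Phi hp).EssSurj := Phi_essSurj hp
  haveI : (Phi hp).IsEquivalence := {}
  refine ⟨(Phi hp).asEquivalence.trans (elemEquiv σ.symm), ?_⟩
  show (Phi hp ⋙ CategoryOfElements.map σ.symm.hom) ⋙ CategoryOfElements.π (u.lan.obj F) = p
  rfl
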